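/- Let S be a real symmetric unreduced tridiagonal N×N matrix (N > 1) with eigenvalues λ_1 = 0 < λ_2 < ... < λ_N. Then every trailing principal submatrix of S of size p×p, for 1 ≤ p ≤ N−1, is positive definite. -/

import Mathlib

open Matrix Polynomial

def IsTridiagonal {N : ℕ} (M : Matrix (Fin N) (Fin N) ℝ) : Prop :=
  ∀ i j : Fin N, ((i : ℕ) + 1 < j ∨ (j : ℕ) + 1 < i) → M i j = 0

def IsUnreduced {N : ℕ} (M : Matrix (Fin N) (Fin N) ℝ) : Prop :=
  ∀ i j : Fin N, (i : ℕ) + 1 = j → (M i j ≠ 0 ∧ M j i ≠ 0)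

lemma sum_trailing {N p : ℕ} (hp : p ≤ N) (f : Fin N → ℝ)
    (hf : ∀ j : Fin N, (j : ℕ) < N - p → f j = 0) :
    ∑ j, f j = ∑ i : Fin p, f ⟨N - p + (i : ℕ), by omega⟩ := by
  classical
  have hinj : Function.Injective (fun i : Fin p => (⟨N - p + (i : ℕ), by omega⟩ : Fin N)) := by
    intro a b hab
    have : N - p + (a : ℕ) = N - p + (b : ℕ) := congrArg Fin.val hab
    exact Fin.ext (by omega)
  let e : Fin p ↪ Fin N := ⟨_, hinj⟩
  have h1 : ∑ j ∈ Finset.univ.map e, f j = ∑ j, f j := by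
    apply Finset.sum_subset (Finset.subset_univ _)
    intro j _ hj
    apply hf
    by_contra h
    apply hj
    simp only [Finset.mem_map, Finset.mem_univ, true_and, e]
    exact ⟨⟨(j : ℕ) - (N - p), by omega⟩, Fin.ext (by simp; omega)⟩
  rw [← h1, Finset.sum_map]
  rfl

lemma psd_of_charpoly {N : ℕ} (S : Matrix (Fin N) (Fin N) ℝ) (hS : S.IsSymm)
    (μ : Fin N → ℝ) (hμnn : ∀ i, 0 ≤ μ i)
    (hchar : S.charpoly = ∏ i, (X - C (μ i))) : S.PosSemidef := by
  have hherm : S.IsHermitian := by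
    rw [Matrix.IsHermitian, Matrix.conjTranspose_eq_transpose_of_trivial]; exact hS
  apply hherm.posSemidef_iff_eigenvalues_nonneg.mpr
  intro i
  set t := hherm.eigenvalues i with ht
  have hmem : t ∈ spectrum ℝ S := hherm.eigenvalues_mem_spectrum_real i
  rw [spectrum.mem_iff] at hmem
  have hdet : ((algebraMap ℝ (Matrix (Fin N) (Fin N) ℝ)) t - S).det = 0 := by
    by_contra h
    exact hmem ((Matrix.isUnit_iff_isUnit_det _).mpr (isUnit_iff_ne_zero.mpr h))
  have heval : S.charpoly.eval t = 0 := by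
    have hmap : (Polynomial.evalRingHom t).mapMatrix (Matrix.charmatrix S)
        = (algebraMap ℝ (Matrix (Fin N) (Fin N) ℝ)) t - S := by
      ext a b
      by_cases hab : a = b
      · subst hab
        simp [Matrix.charmatrix_apply_eq, Matrix.algebraMap_matrix_apply]
      · simp [Matrix.charmatrix_apply_ne _ _ _ hab, Matrix.algebraMap_matrix_apply, hab]
    have := RingHom.map_det (Polynomial.evalRingHom t) (Matrix.charmatrix S)
    rw [hmap] at this
    rw [Matrix.charpoly]
    simpa [hdet] using this
  rw [hchar] at heval
  simp only [Polynomial.eval_prod, Polynomial.eval_sub, Polynomial.eval_X,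
    Polynomial.eval_C] at heval
  obtain ⟨j, _, hj⟩ := Finset.prod_eq_zero_iff.mp heval
  have : t = μ j := by linarith [sub_eq_zero.mp hj]
  rw [this]; exact hμnn j

/-- For a real symmetric unreduced tridiagonal matrix (N > 1) with eigenvalues
`0 = λ₁ < λ₂ < ... < λ_N`, every trailing principal submatrix of size `p × p`,
`1 ≤ p ≤ N - 1`, is positive definite. -/
theorem stmt5 {N : ℕ} (hN : 1 < N) (S : Matrix (Fin N) (Fin N) ℝ)
    (hS : S.IsSymm) (htri : IsTridiagonal S) (hunr : IsUnreduced S)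
    (μ : Fin N → ℝ) (hμ : StrictMono μ) (hμ0 : μ ⟨0, by omega⟩ = 0)
    (hchar : S.charpoly = ∏ i, (X - C (μ i))) :
    ∀ (p : ℕ) (_ : 1 ≤ p) (hp : p < N),
      (S.submatrix (fun i : Fin p => (⟨N - p + (i : ℕ), by omega⟩ : Fin N))
        (fun i : Fin p => (⟨N - p + (i : ℕ), by omega⟩ : Fin N))).PosDef := by
  intro p hp1 hpN
  have hple : p ≤ N := hpN.le
  have hμnn : ∀ i, 0 ≤ μ i := by
    intro i
    rw [← hμ0]
    exact hμ.monotone (by simp [Fin.le_def])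
  have hpsd := psd_of_charpoly S hS μ hμnn hchar
  have hherm : S.IsHermitian := hpsd.1
  set e : Fin p → Fin N := fun i => ⟨N - p + (i : ℕ), by omega⟩ with he
  refine Matrix.posDef_iff_dotProduct_mulVec.mpr ⟨hherm.submatrix e, ?_⟩
  intro x hx
  set y : Fin N → ℝ :=
    fun j => if h : N - p ≤ (j : ℕ) then x ⟨(j : ℕ) - (N - p), by omega⟩ else 0 with hy
  have hy0 : ∀ j : Fin N, (j : ℕ) < N - p → y j = 0 := fun j hj => dif_neg (by omega)
  have hye : ∀ i : Fin p, y (e i) = x i := by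
    intro i
    simp only [hy, he]
    rw [dif_pos (by omega)]
    congr 1
    exact Fin.ext (by simp)
  have hinner : ∀ i : Fin p, (S *ᵥ y) (e i) = ((S.submatrix e e) *ᵥ x) i := by
    intro i
    show ∑ l, S (e i) l * y l = ∑ k, (S.submatrix e e) i k * x k
    rw [sum_trailing hple _ (fun l hl => by rw [hy0 l hl, mul_zero])]
    exact Finset.sum_congr rfl fun k _ => by rw [hye k]; rfl
  have key : dotProduct (star y) (S *ᵥ y) = dotProduct (star x) ((S.submatrix e e) *ᵥ x) := by
    simp only [dotProduct, Pi.star_apply, star_trivial]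
    rw [sum_trailing hple (fun j => y j * (S *ᵥ y) j)
      (fun j hj => by show y j * _ = 0; rw [hy0 j hj, zero_mul])]
    exact Finset.sum_congr rfl fun i _ => by rw [hye i, hinner i]
  have hnn : 0 ≤ dotProduct (star x) ((S.submatrix e e) *ᵥ x) := key ▸ hpsd.dotProduct_mulVec_nonneg y
  rcases hnn.lt_or_eq with hlt | heq
  · exact hlt
  · exfalso
    have hSy : S *ᵥ y = 0 := (hpsd.dotProduct_mulVec_zero_iff y).mp (key.trans heq.symm)
    have hyz : ∀ n : ℕ, ∀ j : Fin N, (j : ℕ) = n → y j = 0 := by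
      intro n
      induction n using Nat.strong_induction_on with
      | _ n ih =>
        intro j hjn
        by_cases hcase : (j : ℕ) < N - p
        · exact hy0 j hcase
        · have h1 : 1 ≤ (j : ℕ) := by omega
          set r : Fin N := ⟨(j : ℕ) - 1, by omega⟩ with hr
          have hrow : (S *ᵥ y) r = 0 := congrFun hSy r
          have hrow' : ∑ l, S r l * y l = 0 := hrow
          have hsum : ∑ l, S r l * y l = S r j * y j := by
            apply Finset.sum_eq_single
            · intro l _ hlj
              by_cases hl : (l : ℕ) < (j : ℕ)
              · rw [ih (l : ℕ) (by omega) l rfl, mul_zero]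
              · have hgt : (r : ℕ) + 1 < (l : ℕ) := by
                  have : (l : ℕ) ≠ (j : ℕ) := fun h => hlj (Fin.ext h)
                  simp only [hr]
                  omega
                rw [htri r l (Or.inl hgt), zero_mul]
            · intro h; exact absurd (Finset.mem_univ j) h
          have hne := (hunr r j (by simp only [hr]; omega)).1
          have hz : S r j * y j = 0 := hsum ▸ hrow'
          exact (mul_eq_zero.mp hz).resolve_left hne
    apply hx
    funext i
    rw [← hye i]
    exact hyz _ (e i) rfl
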